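/- Let n ≥ 2, 0 ≤ γ ≤ 1, and G = I + γ(J − I) where J is the n×n all-ones matrix. If γ ≤ (n−2)/(n−1), then G is (n−1)-incoherent: explicitly, G = Σ_{i=0}^{n−1} F_i where F_i = (1/(n−1) − γ/(n−2))(I − |i⟩⟨i|) + (γ/(n−2))(𝟙 − e_i)(𝟙 − e_i)^T, each F_i is PSD and has its i-th row and column equal to zero. -/

import Mathlib

open Matrix BigOperators Finset ComplexOrder

/-- Circulant matrix: entries depend only on `(j - i) mod n`. -/
def IsCirc {n : ℕ} (G : Matrix (Fin n) (Fin n) ℂ) : Prop :=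
  ∃ g : Fin n → ℂ, ∀ i j, G i j = g (j - i)

/-- The cyclic shift permutation matrix `P` with `P i j = 1` iff `j = i + 1 (mod n)`. -/
def cyclicShift (n : ℕ) [NeZero n] : Matrix (Fin n) (Fin n) ℂ :=
  Matrix.of fun i j => if j = i + 1 then 1 else 0

/-- `k`-incoherent PSD matrix. -/
def KIncoherent {n : ℕ} (k : ℕ) (X : Matrix (Fin n) (Fin n) ℂ) : Prop :=
  ∃ (m : ℕ) (c : Fin m → ℝ) (ψ : Fin m → (Fin n → ℂ)),
    (∀ j, 0 ≤ c j) ∧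
    (∀ j, (Finset.univ.filter fun i => ψ j i ≠ 0).card ≤ k) ∧
    X = ∑ j, (c j : ℂ) • Matrix.vecMulVec (ψ j) (star (ψ j))

/-- `(n-1)`-locally PSD: every principal submatrix obtained by deleting one row and the
corresponding column is positive semidefinite. -/
def LocallyPSD {n : ℕ} (Y : Matrix (Fin n) (Fin n) ℂ) : Prop :=
  ∀ i : Fin n,
    Matrix.PosSemidef (Y.submatrix (fun k : {j : Fin n // j ≠ i} => (k : Fin n))
      (fun k : {j : Fin n // j ≠ i} => (k : Fin n)))

/-- The (unitary) discrete Fourier transform matrix. -/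
noncomputable def dftMatrix (n : ℕ) : Matrix (Fin n) (Fin n) ℂ :=
  Matrix.of fun j k =>
    Complex.exp (2 * Real.pi * Complex.I * (j.val * k.val) / n) / Real.sqrt n

lemma psd_outer' {n : ℕ} (v : Fin n → ℂ) :
    (Matrix.vecMulVec v (star v)).PosSemidef := by
  rw [Matrix.posSemidef_iff_dotProduct_mulVec]
  constructor
  · ext i j
    simp [Matrix.vecMulVec_apply, mul_comm]
  · intro x
    have h : star x ⬝ᵥ (Matrix.vecMulVec v (star v)).mulVec x
        = star (star v ⬝ᵥ x) * (star v ⬝ᵥ x) := by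
      simp [Matrix.vecMulVec_apply, dotProduct, mulVec, Finset.mul_sum,
        Finset.sum_mul, mul_comm, mul_left_comm, mul_assoc]
      rw [Finset.sum_comm]
    rw [h]
    exact star_mul_self_nonneg _

lemma psd_smul' {n : ℕ} {M : Matrix (Fin n) (Fin n) ℂ} (hM : M.PosSemidef)
    {c : ℝ} (hc : 0 ≤ c) : ((c : ℂ) • M).PosSemidef := by
  rw [Matrix.posSemidef_iff_dotProduct_mulVec]
  constructor
  · have h := hM.1
    rw [Matrix.IsHermitian] at h ⊢
    rw [Matrix.conjTranspose_smul, h]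
    simp [Complex.conj_ofReal]
  · intro x
    rw [Matrix.smul_mulVec, dotProduct_smul]
    have h0 : (0:ℂ) ≤ (c:ℂ) := by exact_mod_cast hc
    exact mul_nonneg h0 (hM.dotProduct_mulVec_nonneg x)

lemma sum_std' {n : ℕ} : ∑ j : Fin n, Matrix.single j j (1:ℂ) = 1 := by
  ext a b
  rw [Matrix.sum_apply]
  simp [Matrix.single, Matrix.one_apply, ite_and, Finset.sum_ite_eq']

lemma diag_decomp' {n : ℕ} (i : Fin n) (cr : ℝ) :
    ∑ j : Fin n, (((if i = j then (0:ℝ) else cr) : ℝ) : ℂ) • Matrix.single j j (1:ℂ)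
      = (cr:ℂ) • (1 - Matrix.single i i 1) := by
  have h : ∀ j : Fin n, (((if i = j then (0:ℝ) else cr) : ℝ) : ℂ) •
        Matrix.single j j (1:ℂ)
      = (cr:ℂ) • Matrix.single j j (1:ℂ)
        - (if j = i then (cr:ℂ) • Matrix.single j j (1:ℂ) else 0) := by
    intro j
    split_ifs with h1 h2 <;> simp_all
  rw [Finset.sum_congr rfl fun j _ => h j, Finset.sum_sub_distrib,
    Finset.sum_ite_eq' Finset.univ i, ← Finset.smul_sum, sum_std']
  simp [smul_sub]

theorem stmt10 {n : ℕ} (hn : 2 ≤ n) (γ : ℝ) (hγ0 : 0 ≤ γ) (hγ1 : γ ≤ 1)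
    (hγ : γ ≤ ((n : ℝ) - 2) / ((n : ℝ) - 1))
    (G : Matrix (Fin n) (Fin n) ℂ)
    (hG : G = 1 + (γ : ℂ) • (Matrix.of (fun _ _ => (1 : ℂ)) - 1))
    (F : Fin n → Matrix (Fin n) (Fin n) ℂ)
    (hF : ∀ i, F i =
      ((((n : ℂ) - 1)⁻¹ - (γ : ℂ) / ((n : ℂ) - 2)) •
        (1 - Matrix.single i i 1)) +
      ((γ : ℂ) / ((n : ℂ) - 2)) •
        Matrix.vecMulVec ((fun _ => (1 : ℂ)) - Pi.single i 1)
          ((fun _ => (1 : ℂ)) - Pi.single i 1)) :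
    G = ∑ i, F i ∧ (∀ i, (F i).PosSemidef) ∧
    (∀ i j, F i i j = 0 ∧ F i j i = 0) ∧
    KIncoherent (n - 1) G := by
  set c : ℂ := ((n : ℂ) - 1)⁻¹ - (γ : ℂ) / ((n : ℂ) - 2) with hc_def
  set d : ℂ := (γ : ℂ) / ((n : ℂ) - 2) with hd_def
  have hN1 : (n:ℂ) - 1 ≠ 0 := by
    have : (n:ℂ) ≠ 1 := by exact_mod_cast (by omega : n ≠ 1)
    exact sub_ne_zero.mpr this
  have hcd : (c + d) * ((n:ℂ) - 1) = 1 := by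
    have h : c + d = ((n:ℂ) - 1)⁻¹ := by rw [hc_def]; ring
    rw [h]
    exact inv_mul_cancel₀ hN1
  have hd : d * ((n:ℂ) - 2) = (γ:ℂ) := by
    rcases Nat.lt_or_ge n 3 with h3 | h3
    · have hn2 : n = 2 := by omega
      subst hn2
      have hγ' : γ = 0 := by
        refine le_antisymm ?_ hγ0
        have h := hγ
        norm_num at h
        exact h
      rw [hd_def, hγ']
      norm_num
    · have hN2 : (n:ℂ) - 2 ≠ 0 := by
        have : (n:ℂ) ≠ 2 := by exact_mod_cast (by omega : n ≠ 2)
        exact sub_ne_zero.mpr this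
      rw [hd_def]
      exact div_mul_cancel₀ _ hN2
  obtain ⟨cr, dr, hcrc, hdrd, hcr0, hdr0⟩ :
      ∃ cr dr : ℝ, ((cr:ℂ) = c) ∧ ((dr:ℂ) = d) ∧ 0 ≤ cr ∧ 0 ≤ dr := by
    refine ⟨((n:ℝ) - 1)⁻¹ - γ / ((n:ℝ) - 2), γ / ((n:ℝ) - 2), ?_, ?_, ?_, ?_⟩
    · rw [hc_def, hd_def]; push_cast; ring
    · rw [hd_def]; push_cast; ring
    · rcases Nat.lt_or_ge n 3 with h3 | h3
      · have hn2 : n = 2 := by omega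
        subst hn2
        have hγ' : γ = 0 := by
          refine le_antisymm ?_ hγ0
          have h := hγ
          norm_num at h
          exact h
        rw [hγ']
        norm_num
      · have h2 : (0:ℝ) < (n:ℝ) - 2 := by
          have : (3:ℝ) ≤ (n:ℝ) := by exact_mod_cast h3
          linarith
        have h1 : (0:ℝ) < (n:ℝ) - 1 := by linarith
        rw [sub_nonneg, div_le_iff₀ h2]
        calc γ ≤ ((n:ℝ) - 2) / ((n:ℝ) - 1) := hγ
          _ = ((n:ℝ) - 1)⁻¹ * ((n:ℝ) - 2) := by
              rw [div_eq_mul_inv, mul_comm]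
    · apply div_nonneg hγ0
      have : (2:ℝ) ≤ (n:ℝ) := by exact_mod_cast hn
      linarith
  set v : Fin n → (Fin n → ℂ) := fun i => (fun _ => (1 : ℂ)) - Pi.single i 1 with hv_def
  have hstar : ∀ i, star (v i) = v i := by
    intro i
    funext x
    simp only [hv_def, Pi.star_apply, Pi.sub_apply, Pi.single_apply]
    split_ifs <;> simp
  have key : ∀ a b : Fin n, (∑ i, F i) a b = (n:ℂ) * (if a = b then c + d else d)
      - (if a = b then c + d else d) - (if a = b then 0 else d) := by
    intro a b
    have key1 : ∀ i, F i a b = (if a = b then c + d else d)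
        - (if i = a then (if a = b then c + d else d) else 0)
        - (if i = b then (if a = b then (0:ℂ) else d) else 0) := by
      intro i
      rw [hF]
      simp only [Matrix.add_apply, Matrix.smul_apply, Matrix.sub_apply, Matrix.one_apply,
        Matrix.single, Matrix.of_apply, Matrix.vecMulVec_apply, Pi.sub_apply,
        Pi.single_apply, smul_eq_mul]
      rcases eq_or_ne i a with rfl | hia <;> rcases eq_or_ne i b with rfl | hib
      · simp
      · simp [hib, Ne.symm hib]
      · simp [hia, Ne.symm hia]
      · by_cases hab : a = b <;> simp [hia, hib, hab, Ne.symm hia, Ne.symm hib]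
    rw [Matrix.sum_apply]
    rw [Finset.sum_congr rfl fun i _ => key1 i, Finset.sum_sub_distrib, Finset.sum_sub_distrib,
      Finset.sum_const, Finset.sum_ite_eq' Finset.univ a, Finset.sum_ite_eq' Finset.univ b]
    simp only [Finset.card_univ, Fintype.card_fin, Finset.mem_univ, if_true, nsmul_eq_mul]
  have part1 : G = ∑ i, F i := by
    ext a b
    rw [hG, key]
    simp only [Matrix.add_apply, Matrix.smul_apply, Matrix.sub_apply, Matrix.one_apply,
      Matrix.of_apply, smul_eq_mul]
    split_ifs with hab
    · linear_combination -hcd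
    · linear_combination -hd
  have hdiag : ∀ i : Fin n, ((1 : Matrix (Fin n) (Fin n) ℂ) - Matrix.single i i 1)
      = Matrix.diagonal (fun j => if j = i then 0 else 1) := by
    intro i
    ext a b
    simp only [Matrix.sub_apply, Matrix.one_apply, Matrix.single, Matrix.of_apply,
      Matrix.diagonal_apply]
    rcases eq_or_ne a b with rfl | hab
    · rcases eq_or_ne i a with rfl | h
      · simp
      · simp [h, Ne.symm h]
    · have h : ¬(i = a ∧ i = b) := fun h => hab (h.1.symm.trans h.2)
      simp [hab, h]
  have part2 : ∀ i, (F i).PosSemidef := by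
    intro i
    rw [hF i, ← hcrc, ← hdrd]
    have hA : ((1 : Matrix (Fin n) (Fin n) ℂ) - Matrix.single i i 1).PosSemidef := by
      rw [hdiag i]
      refine Matrix.posSemidef_diagonal_iff.mpr fun j => ?_
      split_ifs <;> simp
    have hB := psd_outer' (v i)
    rw [hstar i] at hB
    exact (psd_smul' hA hcr0).add (psd_smul' hB hdr0)
  have part3 : ∀ i j, F i i j = 0 ∧ F i j i = 0 := by
    intro i j
    constructor <;>
    · rw [hF]
      simp only [Matrix.add_apply, Matrix.smul_apply, Matrix.sub_apply, Matrix.one_apply,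
        Matrix.single, Matrix.of_apply, Matrix.vecMulVec_apply, Pi.sub_apply,
        Pi.single_apply, smul_eq_mul]
      rcases eq_or_ne i j with rfl | hij
      · simp
      · simp [hij, Ne.symm hij]
  refine ⟨part1, part2, part3, ?_⟩
  let e : (Fin n × Fin n) ⊕ Fin n ≃ Fin (n * n + n) :=
    (Equiv.sumCongr finProdFinEquiv (Equiv.refl (Fin n))).trans finSumFinEquiv
  refine ⟨n * n + n,
    fun k => Sum.elim (fun p : Fin n × Fin n => if p.1 = p.2 then 0 else cr)
      (fun _ => dr) (e.symm k),
    fun k => Sum.elim (fun p : Fin n × Fin n => (Pi.single p.2 1 : Fin n → ℂ))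
      (fun i => v i) (e.symm k), ?_, ?_, ?_⟩
  · intro k
    cases h : e.symm k with
    | inl p =>
        simp only [h, Sum.elim_inl]
        split_ifs
        · exact le_refl 0
        · exact hcr0
    | inr i =>
        simp only [h, Sum.elim_inr]
        exact hdr0
  · intro k
    cases h : e.symm k with
    | inl p =>
        simp only [h, Sum.elim_inl]
        have h1 : (Finset.univ.filter fun x => (Pi.single p.2 1 : Fin n → ℂ) x ≠ 0)
            = {p.2} := by
          ext x
          simp [Pi.single_apply]
        rw [h1, Finset.card_singleton]
        omega
    | inr i =>
        simp only [h, Sum.elim_inr]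
        have h2 : (Finset.univ.filter fun x => v i x ≠ 0) = Finset.univ.erase i := by
          ext x
          simp only [Finset.mem_filter, Finset.mem_univ, true_and, Finset.mem_erase, and_true,
            hv_def, Pi.sub_apply, Pi.single_apply]
          rcases eq_or_ne x i with rfl | hxi
          · simp
          · simp [hxi]
        rw [h2, Finset.card_erase_of_mem (Finset.mem_univ i), Finset.card_univ,
          Fintype.card_fin]
  · rw [part1]
    rw [← Equiv.sum_comp e (fun k =>
      ((Sum.elim (fun p : Fin n × Fin n => if p.1 = p.2 then 0 else cr)
          (fun _ => dr) (e.symm k) : ℝ) : ℂ) •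
        Matrix.vecMulVec
          (Sum.elim (fun p : Fin n × Fin n => (Pi.single p.2 1 : Fin n → ℂ))
            (fun i => v i) (e.symm k))
          (star (Sum.elim (fun p : Fin n × Fin n => (Pi.single p.2 1 : Fin n → ℂ))
            (fun i => v i) (e.symm k))))]
    simp only [Equiv.symm_apply_apply, Fintype.sum_sum_type, Sum.elim_inl, Sum.elim_inr,
      Fintype.sum_prod_type]
    have hsingle : ∀ j : Fin n, star (Pi.single j 1 : Fin n → ℂ) = Pi.single j 1 := by
      intro j
      funext x
      simp only [Pi.star_apply, Pi.single_apply]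
      split_ifs <;> simp
    have hinner : ∀ i : Fin n,
        (∑ j : Fin n, (((if i = j then (0:ℝ) else cr) : ℝ) : ℂ) •
          Matrix.vecMulVec (Pi.single j 1 : Fin n → ℂ) (star (Pi.single j 1 : Fin n → ℂ)))
        = (cr : ℂ) • (1 - Matrix.single i i 1) := by
      intro i
      rw [← diag_decomp' i cr]
      refine Finset.sum_congr rfl fun j _ => ?_
      rw [hsingle j, ← Matrix.single_eq_single_vecMulVec_single]
    calc ∑ i, F i
        = ∑ i : Fin n, ((cr : ℂ) • (1 - Matrix.single i i 1)
            + (dr : ℂ) • Matrix.vecMulVec (v i) (star (v i))) := by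
          refine Finset.sum_congr rfl fun i _ => ?_
          rw [hF i, ← hcrc, ← hdrd, hstar i]
      _ = (∑ i : Fin n, (cr : ℂ) • (1 - Matrix.single i i 1))
            + ∑ i : Fin n, (dr : ℂ) • Matrix.vecMulVec (v i) (star (v i)) := by
          rw [Finset.sum_add_distrib]
      _ = (∑ i : Fin n, ∑ j : Fin n, (((if i = j then (0:ℝ) else cr) : ℝ) : ℂ) •
              Matrix.vecMulVec (Pi.single j 1 : Fin n → ℂ) (star (Pi.single j 1 : Fin n → ℂ)))
            + ∑ i : Fin n, (dr : ℂ) • Matrix.vecMulVec (v i) (star (v i)) := by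
          rw [Finset.sum_congr rfl fun i _ => (hinner i).symm]
      _ = _ := by norm_num
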